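/- arXiv:1711.09950 — 4 statements merged into one kernel-verified Lean document; each statement's English description precedes it below -/
import Mathlib

section
/- Let A be the r×r block companion-type matrix over 2×2 complex matrices with identity blocks on the superdiagonal and a block g in the lower-left corner (all other blocks zero), regarded as a 2r×2r complex matrix. Then the characteristic polynomial of A satisfies det(A − λ·I) = det(g − λ^r·I). -/
open Matrix

/-- The `r × r` block matrix (with `2 × 2` complex blocks, so a `2r × 2r` complex
matrix) with identity blocks on the superdiagonal, the block `g` in the
lower-left corner, and zero blocks elsewhere. -/
def markedCycle (r : ℕ) (g : Matrix (Fin 2) (Fin 2) ℂ) :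
    Matrix (Fin r × Fin 2) (Fin r × Fin 2) ℂ :=
  Matrix.of fun p q =>
    if (q.1 : ℕ) = (p.1 : ℕ) + 1 then (1 : Matrix (Fin 2) (Fin 2) ℂ) p.2 q.2
    else if (p.1 : ℕ) = r - 1 ∧ (q.1 : ℕ) = 0 then g p.2 q.2
    else 0

namespace Stmt6Aux

/-- lower-triangular row-operation matrix -/
def Lm (r : ℕ) (lam : ℂ) : Matrix (Fin r × Fin 2) (Fin r × Fin 2) ℂ :=
  Matrix.of fun p q =>
    if p.2 = q.2 then (if (q.1 : ℕ) ≤ (p.1 : ℕ) then lam ^ ((p.1 : ℕ) - (q.1 : ℕ)) else 0) else 0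

/-- column-operation matrix -/
def Um (r : ℕ) (lam : ℂ) : Matrix (Fin r × Fin 2) (Fin r × Fin 2) ℂ :=
  Matrix.of fun p q =>
    if p.2 = q.2 then
      ((if (p.1 : ℕ) = (q.1 : ℕ) then 1 else 0) +
        (if (q.1 : ℕ) = 0 ∧ (p.1 : ℕ) ≠ 0 then lam ^ (p.1 : ℕ) else 0))
    else 0

/-- intermediate product -/
def LMm (r : ℕ) (lam : ℂ) (g : Matrix (Fin 2) (Fin 2) ℂ) :
    Matrix (Fin r × Fin 2) (Fin r × Fin 2) ℂ :=
  Matrix.of fun p q =>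
    (if p.2 = q.2 then
      ((if (q.1 : ℕ) = (p.1 : ℕ) + 1 then 1 else 0) -
        (if (q.1 : ℕ) = 0 then lam ^ ((p.1 : ℕ) + 1) else 0))
    else 0) +
    (if (p.1 : ℕ) = r - 1 ∧ (q.1 : ℕ) = 0 then g p.2 q.2 else 0)

/-- block diagonal matrix diag(h, 1, ..., 1) -/
def Dm (r : ℕ) (h : Matrix (Fin 2) (Fin 2) ℂ) : Matrix (Fin r × Fin 2) (Fin r × Fin 2) ℂ :=
  Matrix.of fun p q =>
    if p.1 = q.1 then (if (q.1 : ℕ) = 0 then h else 1) p.2 q.2 else 0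

lemma sum_range_single (n c : ℕ) (f : ℕ → ℂ) (h : ∀ k < n, k ≠ c → f k = 0) :
    ∑ k ∈ Finset.range n, f k = if c < n then f c else 0 := by
  split_ifs with hc
  · exact Finset.sum_eq_single_of_mem c (Finset.mem_range.2 hc)
      (fun k hk hkc => h k (Finset.mem_range.1 hk) hkc)
  · refine Finset.sum_eq_zero fun k hk => ?_
    have hk' := Finset.mem_range.1 hk
    exact h k hk' (by omega)

lemma lemA (r : ℕ) (lam : ℂ) (g : Matrix (Fin 2) (Fin 2) ℂ) :
    Lm r lam * (markedCycle r g - lam • 1) = LMm r lam g := by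
  ext ⟨i, a⟩ ⟨j, b⟩
  have hi := i.isLt
  have hj := j.isLt
  have hr : 0 < r := i.pos
  simp only [Matrix.mul_apply, Fintype.sum_prod_type, Matrix.sub_apply, Matrix.smul_apply,
    Matrix.one_apply, markedCycle, Lm, LMm, Matrix.of_apply, smul_eq_mul,
    Prod.mk.injEq, ite_and, mul_ite, ite_mul, mul_zero, zero_mul, mul_one, one_mul,
    Finset.sum_ite_irrel, Finset.sum_const_zero, Finset.sum_ite_eq, Finset.mem_univ, if_true]
  have step : ∀ x : Fin r,
      (if (x : ℕ) ≤ (i : ℕ) then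
        lam ^ ((i : ℕ) - (x : ℕ)) *
          ((if (j : ℕ) = (x : ℕ) + 1 then if a = b then (1:ℂ) else 0 else if (x : ℕ) = r - 1 then if (j : ℕ) = 0 then g a b else 0 else 0) -
            if x = j then if a = b then lam else 0 else 0)
      else 0)
      = (if (j:ℕ) = (x:ℕ) + 1 ∧ (x:ℕ) ≤ (i:ℕ) then lam ^ ((i:ℕ) - (x:ℕ)) * (if a = b then 1 else 0) else 0)
        + (if (x:ℕ) = r - 1 ∧ (j:ℕ) = 0 ∧ (x:ℕ) ≤ (i:ℕ) then lam ^ ((i:ℕ) - (x:ℕ)) * g a b else 0)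
        - (if (x:ℕ) = (j:ℕ) ∧ (x:ℕ) ≤ (i:ℕ) then lam ^ ((i:ℕ) - (x:ℕ)) * (if a = b then lam else 0) else 0) := by
    intro x
    have hx := x.isLt
    simp only [Fin.ext_iff]
    split_ifs <;> first  | ring1 | (exfalso; omega)
  rw [Finset.sum_congr rfl fun x _ => step x, Finset.sum_sub_distrib, Finset.sum_add_distrib]
  rw [Fin.sum_univ_eq_sum_range
      (fun k => if (j:ℕ) = k + 1 ∧ k ≤ (i:ℕ) then lam ^ ((i:ℕ) - k) * (if a = b then 1 else 0) else 0) r,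
    Fin.sum_univ_eq_sum_range
      (fun k => if k = r - 1 ∧ (j:ℕ) = 0 ∧ k ≤ (i:ℕ) then lam ^ ((i:ℕ) - k) * g a b else 0) r,
    Fin.sum_univ_eq_sum_range
      (fun k => if k = (j:ℕ) ∧ k ≤ (i:ℕ) then lam ^ ((i:ℕ) - k) * (if a = b then lam else 0) else 0) r,
    sum_range_single r ((j:ℕ) - 1) _ (by intro k hk hkc; split_ifs <;> first | rfl | omega),
    sum_range_single r (r - 1) _ (by intro k hk hkc; split_ifs <;> first | rfl | omega),
    sum_range_single r ((j:ℕ)) _ (by intro k hk hkc; split_ifs <;> first | rfl | omega)]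
  rw [if_pos (show (j:ℕ) - 1 < r by omega), if_pos (show r - 1 < r by omega), if_pos hj]
  split_ifs <;>
    first
      | ring1
      | omega
      | (rw [show (i:ℕ) - ((j:ℕ) - 1) = ((i:ℕ) - (j:ℕ)) + 1 from by omega, pow_succ]; ring1)
      | (rw [show (i:ℕ) - ((j:ℕ) - 1) = 0 from by omega]; ring1)
      | (rw [show (i:ℕ) - (r - 1) = 0 from by omega, show (i:ℕ) - 0 = (i:ℕ) from rfl,
            show (i:ℕ) + 1 = (i:ℕ) + 1 from rfl, pow_succ]; ring1)
      | (rw [pow_succ]; ring1)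
      | (rw [show (i:ℕ) - (j:ℕ) = (i:ℕ) from by omega, pow_succ]; ring1)
      | (rw [show (i:ℕ) - (r - 1) = 0 from by omega, show (i:ℕ) - (j:ℕ) = (i:ℕ) from by omega,
            pow_zero, pow_succ]; ring1)
      | (rw [show (i:ℕ) - (r - 1) = 0 from by omega, pow_zero]; ring1)

lemma lemB (r : ℕ) (hr : 1 ≤ r) (lam : ℂ) (g : Matrix (Fin 2) (Fin 2) ℂ) :
    LMm r lam g * Um r lam = markedCycle r (g - lam ^ r • 1) := by
  ext ⟨i, a⟩ ⟨j, b⟩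
  have hi := i.isLt
  have hj := j.isLt
  simp only [Matrix.mul_apply, Fintype.sum_prod_type, Matrix.sub_apply, Matrix.smul_apply,
    Matrix.one_apply, markedCycle, Um, LMm, Matrix.of_apply, smul_eq_mul,
    Prod.mk.injEq, ite_and, mul_ite, ite_mul, mul_zero, zero_mul, mul_one, one_mul,
    add_mul, mul_add, sub_mul,
    Finset.sum_ite_irrel, Finset.sum_const_zero, Finset.sum_ite_eq, Finset.sum_ite_eq',
    Finset.mem_univ, if_true]
  have step : ∀ x : Fin r,
      (((if (x:ℕ) = (j:ℕ) then
          (if a = b then (if (x:ℕ) = (i:ℕ) + 1 then (1:ℂ) else 0) - if (x:ℕ) = 0 then lam ^ ((i:ℕ) + 1) else 0 else 0) +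
            if (i:ℕ) = r - 1 then if (x:ℕ) = 0 then g a b else 0 else 0
        else 0) +
        if (j:ℕ) = 0 then
          if (x:ℕ) ≠ 0 then
            (if a = b then (if (x:ℕ) = (i:ℕ) + 1 then lam ^ (x:ℕ) else 0) - if (x:ℕ) = 0 then lam ^ ((i:ℕ) + 1) * lam ^ (x:ℕ) else 0
              else 0) +
              if (i:ℕ) = r - 1 then if (x:ℕ) = 0 then g a b * lam ^ (x:ℕ) else 0 else 0
          else 0
        else 0))
      = (if (x:ℕ) = (j:ℕ) then
          (if a = b then (if (x:ℕ) = (i:ℕ) + 1 then (1:ℂ) else 0) - if (x:ℕ) = 0 then lam ^ ((i:ℕ) + 1) else 0 else 0) +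
            (if (i:ℕ) = r - 1 ∧ (x:ℕ) = 0 then g a b else 0)
        else 0) +
        (if (x:ℕ) = (i:ℕ) + 1 ∧ (j:ℕ) = 0 then (if a = b then lam ^ (x:ℕ) else 0) else 0) := by
    intro x
    have hx := x.isLt
    split_ifs <;> first | ring1 | (exfalso; omega)
  rw [Finset.sum_congr rfl fun x _ => step x, Finset.sum_add_distrib]
  rw [Fin.sum_univ_eq_sum_range
      (fun k => if k = (j:ℕ) then
          (if a = b then (if k = (i:ℕ) + 1 then (1:ℂ) else 0) - if k = 0 then lam ^ ((i:ℕ) + 1) else 0 else 0) +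
            (if (i:ℕ) = r - 1 ∧ k = 0 then g a b else 0)
        else 0) r,
    Fin.sum_univ_eq_sum_range
      (fun k => if k = (i:ℕ) + 1 ∧ (j:ℕ) = 0 then (if a = b then lam ^ k else 0) else 0) r,
    sum_range_single r ((j:ℕ)) _ (by intro k hk hkc; split_ifs <;> first | rfl | omega),
    sum_range_single r ((i:ℕ) + 1) _ (by intro k hk hkc; split_ifs <;> first | rfl | omega)]
  rw [if_pos hj]
  split_ifs <;>
    first
      | ring1
      | (exfalso; omega)
      | (rw [show (i:ℕ) + 1 = r from by omega]; ring1)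

lemma detL (r : ℕ) (lam : ℂ) : (Lm r lam).det = 1 := by
  have hbt : (Lm r lam).BlockTriangular (fun p => OrderDual.toDual p.1) := by
    intro p q h
    have h' : (p.1 : ℕ) < (q.1 : ℕ) := by
      exact_mod_cast Fin.lt_iff_val_lt_val.1 h
    simp only [Lm, Matrix.of_apply]
    split_ifs with h1 h2 <;> first | rfl | (exfalso; omega)
  rw [hbt.det_fintype]
  refine Finset.prod_eq_one fun k _ => ?_
  have hblock : (Lm r lam).toSquareBlock (fun p => OrderDual.toDual p.1) k = 1 := by
    ext ⟨p, hp⟩ ⟨q, hq⟩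
    have hfst : p.1 = q.1 := by simpa using hp.trans hq.symm
    have hpq : (p.1 : ℕ) = (q.1 : ℕ) := congrArg Fin.val hfst
    have hiff : ((⟨p, hp⟩ : {a : Fin r × Fin 2 // OrderDual.toDual a.1 = k}) = ⟨q, hq⟩) ↔ p.2 = q.2 := by
      simp [Subtype.ext_iff, Prod.ext_iff, hfst]
    simp only [Matrix.toSquareBlock_def, Lm, Matrix.of_apply, Matrix.one_apply, hiff]
    rw [if_pos (by omega : (q.1 : ℕ) ≤ (p.1 : ℕ)),
      show (p.1 : ℕ) - (q.1 : ℕ) = 0 from by omega, pow_zero]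
  rw [hblock, Matrix.det_one]

lemma detU (r : ℕ) (lam : ℂ) : (Um r lam).det = 1 := by
  have hbt : (Um r lam).BlockTriangular (fun p => OrderDual.toDual p.1) := by
    intro p q h
    have h' : (p.1 : ℕ) < (q.1 : ℕ) := by
      exact_mod_cast Fin.lt_iff_val_lt_val.1 h
    simp only [Um, Matrix.of_apply]
    split_ifs with h1 h2 h3 <;> first | rfl | ring1 | (exfalso; omega)
  rw [hbt.det_fintype]
  refine Finset.prod_eq_one fun k _ => ?_
  have hblock : (Um r lam).toSquareBlock (fun p => OrderDual.toDual p.1) k = 1 := by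
    ext ⟨p, hp⟩ ⟨q, hq⟩
    have hfst : p.1 = q.1 := by simpa using hp.trans hq.symm
    have hpq : (p.1 : ℕ) = (q.1 : ℕ) := congrArg Fin.val hfst
    have hiff : ((⟨p, hp⟩ : {a : Fin r × Fin 2 // OrderDual.toDual a.1 = k}) = ⟨q, hq⟩) ↔ p.2 = q.2 := by
      simp [Subtype.ext_iff, Prod.ext_iff, hfst]
    simp only [Matrix.toSquareBlock_def, Um, Matrix.of_apply, Matrix.one_apply, hiff]
    rw [if_pos hpq, if_neg (by omega : ¬((q.1 : ℕ) = 0 ∧ (p.1 : ℕ) ≠ 0)), add_zero]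
  rw [hblock, Matrix.det_one]

def eqk (r : ℕ) (k : Fin r) : {a : Fin r × Fin 2 // a.1 = k} ≃ Fin 2 where
  toFun := fun a => a.1.2
  invFun := fun x => ⟨(k, x), rfl⟩
  left_inv := by rintro ⟨⟨a1, a2⟩, rfl⟩; rfl
  right_inv := fun x => rfl

lemma detD (r : ℕ) (h : Matrix (Fin 2) (Fin 2) ℂ) (hr : 1 ≤ r) :
    (Dm r h).det = h.det := by
  have hbt : (Dm r h).BlockTriangular (fun p => p.1) := by
    intro p q hlt
    simp only [Dm, Matrix.of_apply]
    rw [if_neg (by exact fun hc => absurd hc (ne_of_gt hlt))]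
  rw [hbt.det_fintype]
  have hblock : ∀ k : Fin r, (Dm r h).toSquareBlock (fun p => p.1) k
      = (if (k : ℕ) = 0 then h else 1).submatrix (eqk r k) (eqk r k) := by
    intro k
    ext ⟨p, hp⟩ ⟨q, hq⟩
    simp only [Matrix.toSquareBlock_def, Dm, Matrix.of_apply, Matrix.submatrix_apply, eqk,
      Equiv.coe_fn_mk]
    rw [if_pos (hp.trans hq.symm), hq]
  calc ∏ k : Fin r, ((Dm r h).toSquareBlock (fun p => p.1) k).det
      = ∏ k : Fin r, (if (k : ℕ) = 0 then h.det else 1) := by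
        refine Finset.prod_congr rfl fun k _ => ?_
        rw [hblock k, Matrix.det_submatrix_equiv_self, apply_ite Matrix.det, Matrix.det_one]
    _ = h.det := by
        have : ∀ k : Fin r, ((k : ℕ) = 0) = (k = ⟨0, by omega⟩) := by
          intro k; simp [Fin.ext_iff]
        simp only [this]
        rw [Finset.prod_ite_eq' Finset.univ]
        simp

lemma detMC (r : ℕ) (hr : 1 ≤ r) (h : Matrix (Fin 2) (Fin 2) ℂ) :
    (markedCycle r h).det = h.det := by
  obtain ⟨n, rfl⟩ : ∃ n, r = n + 1 := ⟨r - 1, by omega⟩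
  set σ : Equiv.Perm (Fin (n + 1) × Fin 2) :=
    Equiv.prodCongrLeft fun _ => finRotate (n + 1) with hσ
  have hsub : markedCycle (n + 1) h = (Dm (n + 1) h).submatrix (⇑σ) id := by
    ext ⟨i, a⟩ ⟨j, b⟩
    have hi := i.isLt
    have hj := j.isLt
    have hσap : σ (i, a) = (i + 1, a) := by
      simp [hσ, Equiv.prodCongrLeft, finRotate_succ_apply]
    have hval : ((i + 1 : Fin (n + 1)) : ℕ) = if (i : ℕ) = n then 0 else (i : ℕ) + 1 := by
      rw [Fin.val_add_one]
      congr 1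
      simp [Fin.ext_iff]
    simp only [markedCycle, Dm, Matrix.of_apply, Matrix.submatrix_apply, hσap, id]
    have hcond : ((i + 1 : Fin (n + 1)) = j) ↔ ((if (i : ℕ) = n then 0 else (i : ℕ) + 1) = (j : ℕ)) := by
      rw [Fin.ext_iff, hval]
    rw [if_congr hcond rfl rfl]
    split_ifs <;> first | rfl | (exfalso; omega)
  have hsign : Equiv.Perm.sign σ = 1 := by
    rw [hσ, Equiv.Perm.sign_prodCongrLeft]
    simp [Int.units_mul_self]
  rw [hsub, Matrix.det_permute σ (Dm (n + 1) h), hsign, detD _ _ (by omega)]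
  simp

end Stmt6Aux

/-- `det(A − λ·I) = det(g − λ^r·I)` for the block companion-type
matrix `A = markedCycle r g`. -/
theorem stmt6 (r : ℕ) (hr : 1 ≤ r) (g : Matrix (Fin 2) (Fin 2) ℂ) (lam : ℂ) :
    (markedCycle r g - lam • 1).det = (g - (lam ^ r) • 1).det := by
  have key : Stmt6Aux.Lm r lam * (markedCycle r g - lam • 1) * Stmt6Aux.Um r lam
      = markedCycle r (g - lam ^ r • 1) := by
    rw [Stmt6Aux.lemA, Stmt6Aux.lemB r hr]
  have hdet := congrArg Matrix.det key
  rwa [Matrix.det_mul, Matrix.det_mul, Stmt6Aux.detL, Stmt6Aux.detU,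
    Stmt6Aux.detMC r hr, one_mul, mul_one] at hdet
end

section
/- Let g be a block-diagonal matrix whose diagonal blocks are matrices A_1, ..., A_s, where each A_i is the 2r_i × 2r_i cyclic block matrix built from a 2×2 matrix g_{α_i} (identity blocks on the superdiagonal, g_{α_i} in the lower-left corner). Then det(g − λ) = ∏_{i=1}^s det(g_{α_i} − λ^{r_i}). -/
open Matrix

/-- Determinant of a block lower triangular matrix is the product of the
determinants of its diagonal blocks. -/
lemma det_block_lower {m κ : Type*} [Fintype m] [DecidableEq m] [LinearOrder κ]
    [DecidableEq κ] (A : Matrix m m ℂ) (b : m → κ) (h : ∀ p q, b p < b q → A p q = 0) :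
    A.det = ∏ a ∈ Finset.univ.image b, (A.toSquareBlock b a).det := by
  have ht : (Aᵀ).BlockTriangular b := fun i j hij => h _ _ hij
  rw [← Matrix.det_transpose A, ht.det]
  refine Finset.prod_congr rfl fun a _ => ?_
  rw [← Matrix.det_transpose]
  congr 1

/-- Determinant of a `(Fin r × Fin 2)`-indexed block lower triangular matrix. -/
lemma det_prod_blocks {r : ℕ} (A : Matrix (Fin r × Fin 2) (Fin r × Fin 2) ℂ)
    (B : Fin r → Matrix (Fin 2) (Fin 2) ℂ)
    (h : ∀ p q : Fin r × Fin 2, (p.1 : ℕ) < (q.1 : ℕ) → A p q = 0)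
    (h2 : ∀ (j : Fin r) (a c : Fin 2), A (j, a) (j, c) = B j a c) :
    A.det = ∏ j : Fin r, (B j).det := by
  rw [det_block_lower A Prod.fst (fun p q hpq => h p q (by exact_mod_cast hpq))]
  have himg : Finset.univ.image (Prod.fst : Fin r × Fin 2 → Fin r) = Finset.univ := by
    apply Finset.image_univ_of_surjective
    intro j; exact ⟨(j, 0), rfl⟩
  rw [himg]
  refine Finset.prod_congr rfl fun j _ => ?_
  let e : Fin 2 ≃ { p : Fin r × Fin 2 // p.1 = j } :=
    { toFun := fun c => ⟨(j, c), rfl⟩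
      invFun := fun p => p.1.2
      left_inv := fun c => rfl
      right_inv := by rintro ⟨⟨k, c⟩, rfl⟩; rfl }
  rw [← Matrix.det_submatrix_equiv_self e (A.toSquareBlock Prod.fst j)]
  congr 1
  ext a c
  simpa [Matrix.toSquareBlock_def, e] using h2 j a c

section Key

variable (m : ℕ) (g : Matrix (Fin 2) (Fin 2) ℂ) (lam : ℂ)

/-- The lower-triangular column-operation matrix. -/
noncomputable def colOp : Matrix (Fin (m + 1) × Fin 2) (Fin (m + 1) × Fin 2) ℂ :=
  fun p q =>
    if (q.1 : ℕ) ≤ (p.1 : ℕ) then lam ^ ((p.1 : ℕ) - (q.1 : ℕ)) *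
      (if p.2 = q.2 then 1 else 0) else 0

/-- The result of the column operations. -/
noncomputable def tMat : Matrix (Fin (m + 1) × Fin 2) (Fin (m + 1) × Fin 2) ℂ :=
  fun p q =>
    if (p.1 : ℕ) = m then
      (if (q.1 : ℕ) = 0 then g p.2 q.2 else 0) -
        lam ^ (m + 1 - (q.1 : ℕ)) * (if p.2 = q.2 then 1 else 0)
    else if (q.1 : ℕ) = (p.1 : ℕ) + 1 then (if p.2 = q.2 then 1 else 0) else 0

lemma colOp_det : (colOp m lam).det = 1 := by
  rw [det_prod_blocks (colOp m lam) (fun _ => 1)]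
  · simp
  · intro p q hpq
    simp only [colOp, if_neg (by omega : ¬ (q.1 : ℕ) ≤ (p.1 : ℕ))]
  · intro j a c
    simp [colOp, Matrix.one_apply]

lemma mul_colOp :
    (markedCycle (m + 1) g - lam • 1) * colOp m lam = tMat m g lam := by
  rw [sub_mul, Matrix.smul_mul, Matrix.one_mul]
  ext ⟨j, a⟩ ⟨k, b⟩
  rw [Matrix.sub_apply, Matrix.smul_apply, smul_eq_mul, Matrix.mul_apply]
  by_cases hj : (j : ℕ) = m
  · -- bottom block row
    have hM : ∀ x : Fin (m + 1) × Fin 2,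
        markedCycle (m + 1) g (j, a) x = if (x.1 : ℕ) = 0 then g a x.2 else 0 := by
      rintro ⟨l, c⟩
      simp only [markedCycle, Matrix.of_apply]
      rw [if_neg (by omega : ¬ (l : ℕ) = (j : ℕ) + 1)]
      simp [hj]
    simp_rw [hM]
    rw [Fintype.sum_prod_type]
    have hz : (0 : Fin (m + 1)) = ⟨0, Nat.succ_pos m⟩ := rfl
    rw [Finset.sum_eq_single (0 : Fin (m + 1))
      (by intro l _ hl; apply Finset.sum_eq_zero; intro c _;
          rw [if_neg (by rw [Ne, Fin.ext_iff, Fin.val_zero] at hl; exact hl), zero_mul])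
      (by intro h; exact absurd (Finset.mem_univ _) h)]
    simp only [Fin.val_zero, if_pos rfl]
    have hE0 : ∀ c : Fin 2, colOp m lam (0, c) (k, b)
        = if (k : ℕ) = 0 then (if c = b then 1 else 0) else 0 := by
      intro c
      simp only [colOp, Fin.val_zero]
      by_cases hk : (k : ℕ) = 0
      · simp [hk]
      · simp [hk]
    simp_rw [hE0]
    have hEjk : colOp m lam (j, a) (k, b)
        = lam ^ (m - (k : ℕ)) * (if a = b then 1 else 0) := by
      simp only [colOp, hj]
      rw [if_pos (by omega)]
    rw [hEjk]
    simp only [tMat, hj, if_pos rfl]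
    have hpow : lam ^ (m + 1 - (k : ℕ)) = lam ^ (m - (k : ℕ)) * lam := by
      rw [show m + 1 - (k : ℕ) = (m - (k : ℕ)) + 1 by omega, pow_succ]
    rw [hpow]
    by_cases hk : (k : ℕ) = 0
    · simp only [hk, if_pos rfl, if_true, mul_ite, mul_one, mul_zero]
      rw [Finset.sum_ite_eq' Finset.univ b (fun x => g a x), if_pos (Finset.mem_univ _)]
      ring
    · simp only [hk, if_false, mul_zero, Finset.sum_const_zero, if_neg hk]
      split_ifs <;> ring
  · -- other block rows
    have hjm : (j : ℕ) < m := by omega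
    set j' : Fin (m + 1) := ⟨(j : ℕ) + 1, by omega⟩ with hj'
    have hM : ∀ x : Fin (m + 1) × Fin 2,
        markedCycle (m + 1) g (j, a) x = if x = (j', a) then 1 else 0 := by
      rintro ⟨l, c⟩
      simp only [markedCycle, Matrix.of_apply]
      by_cases hl : (l : ℕ) = (j : ℕ) + 1
      · have : l = j' := Fin.ext hl
        subst this
        rw [if_pos hl]
        simp [Matrix.one_apply, Prod.ext_iff, eq_comm]
      · rw [if_neg hl, if_neg (by omega)]
        rw [if_neg (by rintro ⟨⟩; exact hl rfl)]
    simp_rw [hM, ite_mul, one_mul, zero_mul]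
    rw [Finset.sum_ite_eq' Finset.univ ((j', a)) (fun x => colOp m lam x (k, b)),
      if_pos (Finset.mem_univ _)]
    have hEj' : colOp m lam (j', a) (k, b)
        = if (k : ℕ) ≤ (j : ℕ) + 1 then lam ^ ((j : ℕ) + 1 - (k : ℕ)) *
            (if a = b then 1 else 0) else 0 := rfl
    have hEj : colOp m lam (j, a) (k, b)
        = if (k : ℕ) ≤ (j : ℕ) then lam ^ ((j : ℕ) - (k : ℕ)) *
            (if a = b then 1 else 0) else 0 := rfl
    rw [hEj', hEj]
    simp only [tMat, if_neg hj]
    split_ifs with h1 h2 h3 <;>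
      first
        | (exfalso; omega)
        | (rw [show (j : ℕ) + 1 - (k : ℕ) = ((j : ℕ) - (k : ℕ)) + 1 by omega, pow_succ]; ring)
        | (rw [show (j : ℕ) + 1 - (k : ℕ) = 0 by omega, pow_zero]; ring)
        | ring

lemma tMat_det : (tMat m g lam).det = (g - lam ^ (m + 1) • 1).det := by
  set σ : Equiv.Perm (Fin (m + 1) × Fin 2) :=
    Equiv.prodCongrLeft (fun _ : Fin 2 => finRotate (m + 1)) with hσ
  have hsign : Equiv.Perm.sign σ = 1 := by
    rw [hσ, Equiv.Perm.sign_prodCongrLeft]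
    simp [sign_finRotate, ← pow_mul, pow_mul']
  have hperm := Matrix.det_permute' σ (tMat m g lam)
  rw [hsign] at hperm
  simp only [Units.val_one, Int.cast_one, one_mul] at hperm
  rw [← hperm]
  have hσval : ∀ p : Fin (m + 1) × Fin 2, σ p = (p.1 + 1, p.2) := by
    rintro ⟨k, b⟩; simp [hσ, Equiv.prodCongrLeft]
  rw [det_prod_blocks _ (fun j : Fin (m + 1) =>
      if (j : ℕ) = m then g - lam ^ (m + 1) • 1 else 1)]
  · rw [Finset.prod_eq_single (Fin.last m)]
    · simp
    · intro j _ hjl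
      have : (j : ℕ) ≠ m := fun h => hjl (by simp [Fin.ext_iff, h])
      simp [this]
    · intro h; exact absurd (Finset.mem_univ _) h
  · rintro ⟨j, a⟩ ⟨k, b⟩ hpq
    have hpq' : (j : ℕ) < (k : ℕ) := hpq
    have hkm : (k : ℕ) < m + 1 := k.isLt
    simp only [Matrix.submatrix_apply, id_eq, hσval]
    have hk1 : ((k + 1 : Fin (m + 1)) : ℕ) = if k = Fin.last m then 0 else (k : ℕ) + 1 :=
      Fin.val_add_one k
    have hjne : (j : ℕ) ≠ m := by omega
    simp only [tMat, if_neg hjne]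
    rw [if_neg]
    by_cases hkl : k = Fin.last m
    · rw [hk1, if_pos hkl]; omega
    · rw [hk1, if_neg hkl]
      have : (k : ℕ) ≠ m := fun h => hkl (Fin.ext (by simp [h]))
      omega
  · intro j a b
    simp only [Matrix.submatrix_apply, id_eq, hσval]
    have hk1 : ((j + 1 : Fin (m + 1)) : ℕ) = if j = Fin.last m then 0 else (j : ℕ) + 1 :=
      Fin.val_add_one j
    by_cases hjl : j = Fin.last m
    · have hjm : (j : ℕ) = m := by simp [hjl]
      simp only [tMat, hjm, if_pos rfl, hk1, if_pos hjl]
      simp [Matrix.sub_apply, Matrix.smul_apply, Matrix.one_apply]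
    · have hjm : (j : ℕ) ≠ m := fun h => hjl (Fin.ext (by simp [h]))
      simp only [tMat, if_neg hjm, hk1, if_neg hjl, if_pos rfl]
      simp [Matrix.one_apply, hjm]

/-- The key per-block determinant identity. -/
lemma markedCycle_det (n : ℕ) (hn : 1 ≤ n) (g : Matrix (Fin 2) (Fin 2) ℂ) (lam : ℂ) :
    (markedCycle n g - lam • 1).det = (g - lam ^ n • 1).det := by
  obtain ⟨m, rfl⟩ := Nat.exists_eq_succ_of_ne_zero (by omega : n ≠ 0)
  calc (markedCycle (m + 1) g - lam • 1).det
      = (markedCycle (m + 1) g - lam • 1).det * (colOp m lam).det := by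
        rw [colOp_det, mul_one]
    _ = ((markedCycle (m + 1) g - lam • 1) * colOp m lam).det := (Matrix.det_mul _ _).symm
    _ = (tMat m g lam).det := by rw [mul_colOp]
    _ = (g - lam ^ (m + 1) • 1).det := tMat_det m g lam

end Key

/-- if `g` is block-diagonal with diagonal blocks the cyclic block
matrices `A_i = markedCycle r_i g_{α_i}`, then
`det(g − λ) = ∏_i det(g_{α_i} − λ^{r_i})`. -/
theorem stmt7 (s : ℕ) (r : Fin s → ℕ) (hr : ∀ i, 1 ≤ r i)
    (gα : Fin s → Matrix (Fin 2) (Fin 2) ℂ) (lam : ℂ) :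
    (Matrix.blockDiagonal' (fun i => markedCycle (r i) (gα i)) - lam • 1).det
      = ∏ i : Fin s, (gα i - (lam ^ (r i)) • 1).det := by
  have h1 : (Matrix.blockDiagonal' (fun i => markedCycle (r i) (gα i)) - lam • 1)
      = Matrix.blockDiagonal' (fun i => markedCycle (r i) (gα i) - lam • 1) := by
    have e1 : (fun i => markedCycle (r i) (gα i) - lam • 1)
        = ((fun i => markedCycle (r i) (gα i)) - lam • 1 :
            ∀ i, Matrix (Fin (r i) × Fin 2) (Fin (r i) × Fin 2) ℂ) := rfl
    rw [e1, Matrix.blockDiagonal'_sub, Matrix.blockDiagonal'_smul, Matrix.blockDiagonal'_one]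
  rw [h1]
  have h2 : (Matrix.blockDiagonal' (fun i => markedCycle (r i) (gα i) - lam • 1)).det
      = ∏ i : Fin s, (markedCycle (r i) (gα i) - lam • 1).det := by
    set D := fun i => markedCycle (r i) (gα i) - lam • (1 :
      Matrix (Fin (r i) × Fin 2) (Fin (r i) × Fin 2) ℂ) with hD
    rw [det_block_lower (Matrix.blockDiagonal' D) Sigma.fst
      (fun p q hpq => Matrix.blockDiagonal'_apply_ne D p.2 q.2 (ne_of_lt hpq))]
    have himg : Finset.univ.image (Sigma.fst :
        (Σ i : Fin s, Fin (r i) × Fin 2) → Fin s) = Finset.univ := by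
      apply Finset.image_univ_of_surjective
      intro i; exact ⟨⟨i, (⟨0, hr i⟩, 0)⟩, rfl⟩
    rw [himg]
    refine Finset.prod_congr rfl fun i _ => ?_
    let e : (Fin (r i) × Fin 2) ≃ { p : Σ j : Fin s, Fin (r j) × Fin 2 // p.1 = i } :=
      { toFun := fun x => ⟨⟨i, x⟩, rfl⟩
        invFun := fun p => cast (congrArg (fun j => Fin (r j) × Fin 2) p.2) p.1.2
        left_inv := fun x => rfl
        right_inv := by rintro ⟨⟨j, x⟩, rfl⟩; rfl }
    rw [← Matrix.det_submatrix_equiv_self e ((Matrix.blockDiagonal' D).toSquareBlock Sigma.fst i)]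
    congr 1
    ext x y
    simp [Matrix.toSquareBlock_def, e, Matrix.blockDiagonal'_apply_eq, hD,
      Matrix.sub_apply, Matrix.smul_apply, smul_eq_mul]
  rw [h2]
  exact Finset.prod_congr rfl fun i _ => markedCycle_det (r i) (hr i) (gα i) lam
end

section
/- Let Γ be a finite subgroup of SL(2,ℂ) and g ∈ Γ ≀ S_N correspond to cycle data (p_r^α) with representatives g_α ∈ Γ. Then g does not have eigenvalue −1 in the 2N-dimensional representation if and only if for every pair (r,α) with p_r^α ≠ 0, at least one of the following holds: (a) g_α ∉ {1, −1}; (b) r is even and g_α = −1; (c) r is odd and g_α = 1. -/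
open Matrix

section Aux

lemma sl2_fixed_eq_one (g : Matrix (Fin 2) (Fin 2) ℂ) (hdet : g.det = 1)
    (n : ℕ) (hn : 0 < n) (hgn : g ^ n = 1)
    (h : ∃ w : Fin 2 → ℂ, w ≠ 0 ∧ g.mulVec w = w) : g = 1 := by
  obtain ⟨w, hw0, hw⟩ := h
  have h0 : (g - 1).det = 0 := by
    rw [← Matrix.exists_mulVec_eq_zero_iff]
    exact ⟨w, hw0, by rw [Matrix.sub_mulVec, Matrix.one_mulVec, hw, sub_self]⟩
  rw [Matrix.det_fin_two] at hdet h0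
  simp only [Matrix.sub_apply, Matrix.one_apply] at h0
  have h0' : (g 0 0 - 1) * (g 1 1 - 1) - g 0 1 * g 1 0 = 0 := by simpa using h0
  have htr : g 0 0 + g 1 1 = 2 := by linear_combination hdet - h0'
  set N : Matrix (Fin 2) (Fin 2) ℂ := g - 1 with hN
  have hN2 : N * N = 0 := by
    ext i j
    fin_cases i <;> fin_cases j <;>
      simp [hN, Matrix.mul_apply, Fin.sum_univ_two, Matrix.one_apply] <;>
      first
        | linear_combination g 0 0 * htr - hdet
        | linear_combination g 0 1 * htr
        | linear_combination g 1 0 * htr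
        | linear_combination g 1 1 * htr - hdet
  have hpow : ∀ m : ℕ, (1 + N) ^ m = 1 + (m : ℂ) • N := by
    intro m
    induction m with
    | zero => simp
    | succ k ih =>
        rw [pow_succ, ih, add_mul, one_mul, mul_add, mul_one, smul_mul_assoc, hN2,
          smul_zero, add_zero]
        push_cast
        rw [add_smul, one_smul]
        abel
  have hg1 : g = 1 + N := by rw [hN]; noncomm_ring
  have := hgn
  rw [hg1, hpow n] at this
  have hNz : (n : ℂ) • N = 0 := by
    have := congrArg (· - (1 : Matrix (Fin 2) (Fin 2) ℂ)) this
    simpa using this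
  have : N = 0 := by
    rcases smul_eq_zero.mp hNz with h | h
    · exact absurd h (by exact_mod_cast hn.ne')
    · exact h
  rw [hg1, this, add_zero]

lemma sl2_eigen_one (g : Matrix (Fin 2) (Fin 2) ℂ) (hdet : g.det = 1)
    (n : ℕ) (hn : 0 < n) (hgn : g ^ n = 1) :
    (∃ w : Fin 2 → ℂ, w ≠ 0 ∧ g.mulVec w = w) ↔ g = 1 := by
  constructor
  · exact sl2_fixed_eq_one g hdet n hn hgn
  · rintro rfl
    refine ⟨![1, 0], ?_, Matrix.one_mulVec _⟩
    intro h; simpa using congrFun h 0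

lemma sl2_eigen_neg_one (g : Matrix (Fin 2) (Fin 2) ℂ) (hdet : g.det = 1)
    (n : ℕ) (hn : 0 < n) (hgn : g ^ n = 1) :
    (∃ w : Fin 2 → ℂ, w ≠ 0 ∧ g.mulVec w = -w) ↔ g = -1 := by
  have hdet' : (-g).det = 1 := by
    rw [Matrix.det_neg]
    simp [hdet]
  have hgn' : (-g) ^ (2 * n) = 1 := by
    have : (-g) ^ (2 * n) = ((-g) ^ 2) ^ n := by rw [← pow_mul]
    rw [this, neg_sq, ← pow_mul, mul_comm 2 n, pow_mul, hgn, one_pow]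
  have := sl2_eigen_one (-g) hdet' (2 * n) (by omega) hgn'
  constructor
  · intro ⟨w, hw0, hw⟩
    have h1 : -g = 1 := this.mp ⟨w, hw0, by rw [Matrix.neg_mulVec, hw, neg_neg]⟩
    rw [← neg_neg g, h1]
  · rintro rfl
    exact ⟨![1, 0], by
      constructor
      · intro h; simpa using congrFun h 0
      · rw [Matrix.neg_mulVec, Matrix.one_mulVec]⟩

lemma markedCycle_mulVec_lt (r : ℕ) (g : Matrix (Fin 2) (Fin 2) ℂ)
    (v : Fin r × Fin 2 → ℂ) (p : Fin r × Fin 2) (h : (p.1 : ℕ) + 1 < r) :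
    (markedCycle r g).mulVec v p = v (⟨(p.1 : ℕ) + 1, h⟩, p.2) := by
  rw [Matrix.mulVec, dotProduct, Fintype.sum_prod_type]
  rw [Finset.sum_eq_single (⟨(p.1 : ℕ) + 1, h⟩ : Fin r)]
  · rw [Finset.sum_eq_single p.2]
    · simp [markedCycle, Matrix.one_apply]
    · intro b _ hb
      simp [markedCycle, Matrix.one_apply, hb, Ne.symm hb]
    · simp
  · intro q1 _ hq1
    apply Finset.sum_eq_zero
    intro b _
    have h1 : (q1 : ℕ) ≠ (p.1 : ℕ) + 1 := by
      intro hc; exact hq1 (Fin.ext hc)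
    have h2 : (p.1 : ℕ) ≠ r - 1 := by omega
    simp [markedCycle, h1, h2]
  · simp

lemma markedCycle_mulVec_last (r : ℕ) (g : Matrix (Fin 2) (Fin 2) ℂ)
    (v : Fin r × Fin 2 → ℂ) (p : Fin r × Fin 2) (h : (p.1 : ℕ) = r - 1) :
    (markedCycle r g).mulVec v p =
      g.mulVec (fun b => v (⟨0, p.1.pos⟩, b)) p.2 := by
  have hr : 0 < r := p.1.pos
  rw [Matrix.mulVec, dotProduct, Fintype.sum_prod_type]
  rw [Finset.sum_eq_single (⟨0, hr⟩ : Fin r)]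
  · rw [Matrix.mulVec, dotProduct]
    apply Finset.sum_congr rfl
    intro b _
    have h1 : (0 : ℕ) ≠ (p.1 : ℕ) + 1 := by omega
    simp [markedCycle, h1, h]
  · intro q1 _ hq1
    apply Finset.sum_eq_zero
    intro b _
    have h0 : (q1 : ℕ) ≠ 0 := fun hc => hq1 (Fin.ext hc)
    have h1 : (q1 : ℕ) ≠ (p.1 : ℕ) + 1 := by omega
    simp [markedCycle, h1, h0]
  · simp

lemma markedCycle_eigen (r : ℕ) (hr : 1 ≤ r) (g : Matrix (Fin 2) (Fin 2) ℂ) :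
    (∃ v : Fin r × Fin 2 → ℂ, v ≠ 0 ∧ (markedCycle r g).mulVec v = -v) ↔
      (∃ w : Fin 2 → ℂ, w ≠ 0 ∧ g.mulVec w = ((-1 : ℂ) ^ r) • w) := by
  have hr0 : 0 < r := hr
  constructor
  · rintro ⟨v, hv0, hv⟩
    have key : ∀ j : ℕ, ∀ hj : j < r, ∀ a : Fin 2,
        v (⟨j, hj⟩, a) = (-1 : ℂ) ^ j * v (⟨0, hr0⟩, a) := by
      intro j
      induction j with
      | zero => intro hj a; simp
      | succ k ih =>
          intro hj a
          have hk : k < r := by omega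
          have := markedCycle_mulVec_lt r g v (⟨k, hk⟩, a) (by simpa using hj)
          rw [hv] at this
          simp only [Pi.neg_apply] at this
          rw [ih hk a] at this
          rw [← this]
          ring
    refine ⟨fun b => v (⟨0, hr0⟩, b), ?_, ?_⟩
    · intro hw
      apply hv0
      funext p
      obtain ⟨⟨j, hj⟩, a⟩ := p
      rw [key j hj a]
      have : v (⟨0, hr0⟩, a) = 0 := congrFun hw a
      rw [this, mul_zero]; rfl
    · funext a
      have hlast := markedCycle_mulVec_last r g v (⟨r - 1, by omega⟩, a) (by simp)
      rw [hv] at hlast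
      simp only [Pi.neg_apply] at hlast
      rw [key (r - 1) (by omega) a] at hlast
      rw [Pi.smul_apply, smul_eq_mul]
      rw [← hlast]
      have : (-1 : ℂ) ^ r = -(-1 : ℂ) ^ (r - 1) := by
        conv_lhs => rw [show r = (r - 1) + 1 by omega]
        rw [pow_succ]; ring
      rw [this]; ring
  · rintro ⟨w, hw0, hw⟩
    refine ⟨fun p => (-1 : ℂ) ^ (p.1 : ℕ) * w p.2, ?_, ?_⟩
    · intro hv
      apply hw0
      funext b
      have := congrFun hv (⟨0, hr0⟩, b)
      simpa using this
    · funext p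
      obtain ⟨⟨j, hj⟩, a⟩ := p
      by_cases h : j + 1 < r
      · rw [markedCycle_mulVec_lt r g _ (⟨j, hj⟩, a) (by simpa using h)]
        simp only [Pi.neg_apply]
        ring
      · have hj' : j = r - 1 := by omega
        rw [markedCycle_mulVec_last r g _ (⟨j, hj⟩, a) (by simpa using hj')]
        simp only [Pi.neg_apply]
        rw [show (fun b => (-1 : ℂ) ^ (((⟨0, (⟨j, hj⟩ : Fin r).pos⟩ : Fin r)) : ℕ) * w b)
            = w by funext b; simp]
        rw [hw]
        have : (-1 : ℂ) ^ r = -(-1 : ℂ) ^ j := by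
          subst hj'
          conv_lhs => rw [show r = (r - 1) + 1 by omega]
          rw [pow_succ]; ring
        rw [Pi.smul_apply, smul_eq_mul, this]
        ring

lemma blockDiagonal'_mulVec_apply {s : ℕ} {m : Fin s → Type*} [∀ i, Fintype (m i)]
    [∀ i, DecidableEq (m i)] (M : ∀ i, Matrix (m i) (m i) ℂ)
    (v : (Σ i, m i) → ℂ) (i : Fin s) (x : m i) :
    (Matrix.blockDiagonal' M).mulVec v ⟨i, x⟩ =
      (M i).mulVec (fun y => v ⟨i, y⟩) x := by
  rw [Matrix.mulVec, dotProduct, ← Finset.univ_sigma_univ, Finset.sum_sigma]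
  rw [Finset.sum_eq_single i]
  · rw [Matrix.mulVec, dotProduct]
    apply Finset.sum_congr rfl
    intro y _
    simp [Matrix.blockDiagonal'_apply_eq]
  · intro j _ hj
    apply Finset.sum_eq_zero
    intro y _
    rw [Matrix.blockDiagonal'_apply_ne M x y (Ne.symm hj), zero_mul]
  · simp

lemma blockDiagonal'_eigen {s : ℕ} {m : Fin s → Type*} [∀ i, Fintype (m i)]
    [∀ i, DecidableEq (m i)] (M : ∀ i, Matrix (m i) (m i) ℂ) :
    (∃ v : (Σ i, m i) → ℂ, v ≠ 0 ∧ (Matrix.blockDiagonal' M).mulVec v = -v) ↔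
      ∃ i, ∃ w : m i → ℂ, w ≠ 0 ∧ (M i).mulVec w = -w := by
  constructor
  · rintro ⟨v, hv0, hv⟩
    have : ∃ p : Σ i, m i, v p ≠ 0 := by
      by_contra hc
      push_neg at hc
      exact hv0 (funext fun p => hc p)
    obtain ⟨⟨i, x⟩, hx⟩ := this
    refine ⟨i, fun y => v ⟨i, y⟩, fun hc => hx (congrFun hc x), ?_⟩
    funext y
    rw [← blockDiagonal'_mulVec_apply M v i y, hv]
    rfl
  · rintro ⟨i, w, hw0, hw⟩
    classical
    refine ⟨fun q => if h : q.1 = i then w (h ▸ q.2) else 0, ?_, ?_⟩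
    · intro hc
      apply hw0
      funext y
      have := congrFun hc ⟨i, y⟩
      simpa using this
    · funext q
      obtain ⟨j, y⟩ := q
      rw [blockDiagonal'_mulVec_apply]
      by_cases h : j = i
      · subst h
        simpa using congrFun hw y
      · simp only [Pi.neg_apply, dif_neg h]
        rw [show (fun _ : m j => (0:ℂ)) = (0 : m j → ℂ) from rfl, Matrix.mulVec_zero]
        simp

end Aux

/-- let `Γ` be a finite subgroup of `SL(2,ℂ)` and let
`g ∈ Γ ≀ S_N ⊂ Sp(2N,ℂ)` correspond to cycle data given by cycles `i = 1,…,s`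
of lengths `r i` marked by representatives `gα i ∈ Γ` (the pairs `(r,α)` with
`p_r^α ≠ 0` are exactly the pairs `(r i, gα i)`).  Then `g` has no eigenvalue
`−1` iff for every `i` at least one of the following holds:
(a) `gα i ∉ {1, −1}`; (b) `r i` is even and `gα i = −1`; (c) `r i` is odd and
`gα i = 1`. -/
theorem stmt9 (Γ : Subgroup (Matrix.SpecialLinearGroup (Fin 2) ℂ)) [Finite Γ]
    (s : ℕ) (r : Fin s → ℕ) (hr : ∀ i, 1 ≤ r i) (gα : Fin s → Γ) :
    (¬ ∃ v : (Σ i : Fin s, Fin (r i) × Fin 2) → ℂ, v ≠ 0 ∧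
        (Matrix.blockDiagonal'
          (fun i => markedCycle (r i) ((gα i : Matrix.SpecialLinearGroup (Fin 2) ℂ) :
            Matrix (Fin 2) (Fin 2) ℂ))).mulVec v = -v)
      ↔ ∀ i : Fin s,
          (((gα i : Matrix.SpecialLinearGroup (Fin 2) ℂ) :
              Matrix (Fin 2) (Fin 2) ℂ) ≠ 1 ∧
           ((gα i : Matrix.SpecialLinearGroup (Fin 2) ℂ) :
              Matrix (Fin 2) (Fin 2) ℂ) ≠ -1)
        ∨ (Even (r i) ∧ ((gα i : Matrix.SpecialLinearGroup (Fin 2) ℂ) :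
              Matrix (Fin 2) (Fin 2) ℂ) = -1)
        ∨ (Odd (r i) ∧ ((gα i : Matrix.SpecialLinearGroup (Fin 2) ℂ) :
              Matrix (Fin 2) (Fin 2) ℂ) = 1) := by
  set G : Fin s → Matrix (Fin 2) (Fin 2) ℂ :=
    fun i => ((gα i : Matrix.SpecialLinearGroup (Fin 2) ℂ) : Matrix (Fin 2) (Fin 2) ℂ)
    with hGdef
  have hdet : ∀ i, (G i).det = 1 := fun i =>
    (gα i : Matrix.SpecialLinearGroup (Fin 2) ℂ).2
  have hord : ∀ i, ∃ n, 0 < n ∧ (G i) ^ n = 1 := by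
    intro i
    refine ⟨orderOf (gα i), orderOf_pos (gα i), ?_⟩
    have h1 : (gα i) ^ orderOf (gα i) = 1 := pow_orderOf_eq_one _
    have h2 := congrArg
      (fun x : Γ => ((x : Matrix.SpecialLinearGroup (Fin 2) ℂ) :
        Matrix (Fin 2) (Fin 2) ℂ)) h1
    rw [hGdef]
    simp only
    rw [← Matrix.SpecialLinearGroup.coe_pow, ← Subgroup.coe_pow, h1]
    rfl
  have percyc : ∀ i, (∃ v : Fin (r i) × Fin 2 → ℂ, v ≠ 0 ∧
      (markedCycle (r i) (G i)).mulVec v = -v) ↔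
      ((Even (r i) ∧ G i = 1) ∨ (Odd (r i) ∧ G i = -1)) := by
    intro i
    obtain ⟨n, hn, hgn⟩ := hord i
    rw [markedCycle_eigen (r i) (hr i) (G i)]
    rcases Nat.even_or_odd (r i) with he | ho
    · rw [he.neg_one_pow]
      simp only [one_smul]
      rw [sl2_eigen_one (G i) (hdet i) n hn hgn]
      constructor
      · intro h; exact Or.inl ⟨he, h⟩
      · rintro (⟨_, h⟩ | ⟨ho, _⟩)
        · exact h
        · exact absurd ho (Nat.not_odd_iff_even.mpr he)
    · rw [ho.neg_one_pow]
      simp only [neg_smul, one_smul]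
      rw [sl2_eigen_neg_one (G i) (hdet i) n hn hgn]
      constructor
      · intro h; exact Or.inr ⟨ho, h⟩
      · rintro (⟨he, _⟩ | ⟨_, h⟩)
        · exact absurd ho (Nat.not_odd_iff_even.mpr he)
        · exact h
  rw [blockDiagonal'_eigen, not_exists]
  refine forall_congr' fun i => ?_
  rw [percyc i]
  have hne : (1 : Matrix (Fin 2) (Fin 2) ℂ) ≠ -1 := by
    intro h
    have := congrFun (congrFun h 0) 0
    simp at this
    norm_num at this
  have hpar : ¬ (Even (r i) ∧ Odd (r i)) := by
    rintro ⟨he, ho⟩; exact (Nat.not_odd_iff_even.mpr he) ho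
  have hpar2 : Even (r i) ∨ Odd (r i) := Nat.even_or_odd (r i)
  constructor
  · intro h
    by_cases h1 : G i = 1
    · rcases hpar2 with he | ho
      · exact absurd (Or.inl ⟨he, h1⟩) h
      · exact Or.inr (Or.inr ⟨ho, h1⟩)
    · by_cases h2 : G i = -1
      · rcases hpar2 with he | ho
        · exact Or.inr (Or.inl ⟨he, h2⟩)
        · exact absurd (Or.inr ⟨ho, h2⟩) h
      · exact Or.inl ⟨h1, h2⟩
  · rintro (⟨h1, h2⟩ | ⟨he, h2⟩ | ⟨ho, h1⟩) (⟨he', he1⟩ | ⟨ho', ho1⟩)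
    · exact h1 he1
    · exact h2 ho1
    · exact hne (he1.symm.trans h2)
    · exact hpar ⟨he, ho'⟩
    · exact hpar ⟨he', ho⟩
    · exact hne (h1.symm.trans ho1)
end

section
/- Let A be an associative superalgebra containing a Klein operator K (an even element with K² = 1 and Kf = (−1)^{π(f)} fK for all homogeneous f). Then the map sending a trace tr to the functional f ↦ tr(f·K^{1+π(f)}) is a linear isomorphism from the space of traces on A onto the space of supertraces on A. -/
section Aux
variable {A : Type*} [Ring A] [Algebra ℂ A]
  (𝒜 : ZMod 2 → Submodule ℂ A) [GradedAlgebra 𝒜] (K : A)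

noncomputable def projMap (i : ZMod 2) : A →ₗ[ℂ] A :=
  (𝒜 i).subtype ∘ₗ (DirectSum.component ℂ (ZMod 2) (fun j => 𝒜 j) i) ∘ₗ
    (DirectSum.decomposeLinearEquiv 𝒜).toLinearMap

noncomputable def phiMap : A →ₗ[ℂ] A :=
  (LinearMap.mulRight ℂ K) ∘ₗ projMap 𝒜 0 + projMap 𝒜 1

lemma zmod2_cases : ∀ i : ZMod 2, i = 0 ∨ i = 1 := by decide

lemma phiMap_homog (hK2 : K ^ 2 = 1) :
    ∀ i : ZMod 2, ∀ f ∈ 𝒜 i, phiMap 𝒜 K f = f * K ^ (1 + i.val) := by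
  intro i f hf
  have h0 : phiMap 𝒜 K f = (DirectSum.decompose 𝒜 f 0 : A) * K +
      (DirectSum.decompose 𝒜 f 1 : A) := rfl
  rcases zmod2_cases i with rfl | rfl
  · rw [h0, DirectSum.decompose_of_mem_same 𝒜 hf,
      DirectSum.decompose_of_mem_ne 𝒜 hf (by decide : (0 : ZMod 2) ≠ 1)]
    norm_num
  · rw [h0, DirectSum.decompose_of_mem_same 𝒜 hf,
      DirectSum.decompose_of_mem_ne 𝒜 hf (by decide : (1 : ZMod 2) ≠ 0)]
    show (0:A) * K + f = f * K ^ (1 + (1 : ZMod 2).val)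
    have h1 : (1 : ZMod 2).val = 1 := rfl
    rw [h1]
    simp [pow_succ, pow_one, hK2]

variable {𝒜 K}

lemma phiMap_homog0 (hK2 : K ^ 2 = 1) {f : A} (hf : f ∈ 𝒜 0) :
    phiMap 𝒜 K f = f * K := by
  rw [phiMap_homog 𝒜 K hK2 0 f hf]; norm_num

lemma phiMap_homog1 (hK2 : K ^ 2 = 1) {f : A} (hf : f ∈ 𝒜 1) :
    phiMap 𝒜 K f = f := by
  rw [phiMap_homog 𝒜 K hK2 1 f hf]
  have h1 : (1 : ZMod 2).val = 1 := rfl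
  rw [h1]; norm_num [hK2]

lemma phiMap_invol (hK0 : K ∈ 𝒜 0) (hK2 : K ^ 2 = 1) (a : A) :
    phiMap 𝒜 K (phiMap 𝒜 K a) = a := by
  induction a using DirectSum.Decomposition.inductionOn 𝒜 with
  | zero => simp
  | add m m' hm hm' => simp only [map_add, hm, hm']
  | homogeneous m =>
    rename_i i
    obtain ⟨m, hm⟩ := m
    rcases zmod2_cases i with rfl | rfl
    · have hmk : m * K ∈ 𝒜 0 := by simpa using SetLike.mul_mem_graded hm hK0
      rw [phiMap_homog0 hK2 hm, phiMap_homog0 hK2 hmk,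
        mul_assoc, ← pow_two, hK2, mul_one]
    · rw [phiMap_homog1 hK2 hm, phiMap_homog1 hK2 hm]

section transfer
variable (hK0 : K ∈ 𝒜 0) (hK2 : K ^ 2 = 1)
  (hK : ∀ (i : ZMod 2), ∀ f ∈ 𝒜 i, K * f = (-1 : A) ^ i.val * (f * K))

include hK in
lemma Kcomm0 {f : A} (hf : f ∈ 𝒜 0) : K * f = f * K := by
  have := hK 0 f hf
  simpa using this

include hK in
lemma Kcomm1 {f : A} (hf : f ∈ 𝒜 1) : K * f = -(f * K) := by
  have := hK 1 f hf
  have h1 : (1 : ZMod 2).val = 1 := rfl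
  rw [h1] at this
  simpa using this

include hK2 hK in
lemma trace_to_super {T : A →ₗ[ℂ] ℂ} (hT : ∀ a b : A, T (a * b) = T (b * a)) :
    ∀ (i j : ZMod 2), ∀ f ∈ 𝒜 i, ∀ g ∈ 𝒜 j,
      (T ∘ₗ phiMap 𝒜 K) (f * g) = (-1 : ℂ) ^ (i.val * j.val) * (T ∘ₗ phiMap 𝒜 K) (g * f) := by
  intro i j f hf g hg
  simp only [LinearMap.comp_apply]
  rcases zmod2_cases i with rfl | rfl <;> rcases zmod2_cases j with rfl | rfl
  · -- (0,0)
    have hfg : f * g ∈ 𝒜 0 := by simpa using SetLike.mul_mem_graded hf hg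
    have hgf : g * f ∈ 𝒜 0 := by simpa using SetLike.mul_mem_graded hg hf
    rw [phiMap_homog0 hK2 hfg, phiMap_homog0 hK2 hgf]
    have : T (f * g * K) = T (g * f * K) := by
      rw [mul_assoc f g K, hT f (g * K), mul_assoc g K f, Kcomm0 hK hf, ← mul_assoc]
    rw [this]; norm_num
  · -- (0,1)
    have hfg : f * g ∈ 𝒜 1 := by simpa using SetLike.mul_mem_graded hf hg
    have hgf : g * f ∈ 𝒜 1 := by simpa using SetLike.mul_mem_graded hg hf
    rw [phiMap_homog1 hK2 hfg, phiMap_homog1 hK2 hgf, hT f g]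
    norm_num
  · -- (1,0)
    have hfg : f * g ∈ 𝒜 1 := by simpa using SetLike.mul_mem_graded hf hg
    have hgf : g * f ∈ 𝒜 1 := by simpa using SetLike.mul_mem_graded hg hf
    rw [phiMap_homog1 hK2 hfg, phiMap_homog1 hK2 hgf, hT f g]
    norm_num
  · -- (1,1)
    have hfg : f * g ∈ 𝒜 0 := by
      have := SetLike.mul_mem_graded hf hg
      rwa [show ((1 : ZMod 2) + 1) = 0 by decide] at this
    have hgf : g * f ∈ 𝒜 0 := by
      have := SetLike.mul_mem_graded hg hf
      rwa [show ((1 : ZMod 2) + 1) = 0 by decide] at this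
    rw [phiMap_homog0 hK2 hfg, phiMap_homog0 hK2 hgf]
    have : T (f * g * K) = -T (g * f * K) := by
      rw [mul_assoc f g K, hT f (g * K), mul_assoc g K f, Kcomm1 hK hf, mul_neg, map_neg,
        ← mul_assoc]
    rw [this]
    have h1 : (1 : ZMod 2).val = 1 := rfl
    rw [h1]; ring

include hK0 hK2 hK in
lemma super_to_trace {S : A →ₗ[ℂ] ℂ}
    (hS : ∀ (i j : ZMod 2), ∀ f ∈ 𝒜 i, ∀ g ∈ 𝒜 j,
      S (f * g) = (-1 : ℂ) ^ (i.val * j.val) * S (g * f)) :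
    ∀ a b : A, (S ∘ₗ phiMap 𝒜 K) (a * b) = (S ∘ₗ phiMap 𝒜 K) (b * a) := by
  have core : ∀ (i j : ZMod 2), ∀ f ∈ 𝒜 i, ∀ g ∈ 𝒜 j,
      S (phiMap 𝒜 K (f * g)) = S (phiMap 𝒜 K (g * f)) := by
    intro i j f hf g hg
    rcases zmod2_cases i with rfl | rfl <;> rcases zmod2_cases j with rfl | rfl
    · have hfg : f * g ∈ 𝒜 0 := by simpa using SetLike.mul_mem_graded hf hg
      have hgf : g * f ∈ 𝒜 0 := by simpa using SetLike.mul_mem_graded hg hf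
      have hgk : g * K ∈ 𝒜 0 := by simpa using SetLike.mul_mem_graded hg hK0
      rw [phiMap_homog0 hK2 hfg, phiMap_homog0 hK2 hgf]
      have h := hS 0 0 f hf (g * K) hgk
      rw [mul_assoc f g K, h, mul_assoc g K f, Kcomm0 hK hf, ← mul_assoc]
      norm_num
    · have hfg : f * g ∈ 𝒜 1 := by simpa using SetLike.mul_mem_graded hf hg
      have hgf : g * f ∈ 𝒜 1 := by simpa using SetLike.mul_mem_graded hg hf
      rw [phiMap_homog1 hK2 hfg, phiMap_homog1 hK2 hgf]
      have h := hS 0 1 f hf g hg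
      rw [h]; norm_num
    · have hfg : f * g ∈ 𝒜 1 := by simpa using SetLike.mul_mem_graded hf hg
      have hgf : g * f ∈ 𝒜 1 := by simpa using SetLike.mul_mem_graded hg hf
      rw [phiMap_homog1 hK2 hfg, phiMap_homog1 hK2 hgf]
      have h := hS 1 0 f hf g hg
      rw [h]; norm_num
    · have hfg : f * g ∈ 𝒜 0 := by
        have := SetLike.mul_mem_graded hf hg
        rwa [show ((1 : ZMod 2) + 1) = 0 by decide] at this
      have hgf : g * f ∈ 𝒜 0 := by
        have := SetLike.mul_mem_graded hg hf
        rwa [show ((1 : ZMod 2) + 1) = 0 by decide] at this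
      have hgk : g * K ∈ 𝒜 1 := by simpa using SetLike.mul_mem_graded hg hK0
      rw [phiMap_homog0 hK2 hfg, phiMap_homog0 hK2 hgf]
      have h := hS 1 1 f hf (g * K) hgk
      rw [mul_assoc f g K, h, mul_assoc g K f, Kcomm1 hK hf, mul_neg, map_neg, ← mul_assoc]
      have h1 : (1 : ZMod 2).val = 1 := rfl
      rw [h1]; ring
  intro a b
  simp only [LinearMap.comp_apply]
  induction a using DirectSum.Decomposition.inductionOn 𝒜 with
  | zero => simp
  | add m m' hm hm' => simp only [add_mul, mul_add, map_add, hm, hm']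
  | homogeneous m =>
    rename_i i
    obtain ⟨f, hf⟩ := m
    induction b using DirectSum.Decomposition.inductionOn 𝒜 with
    | zero => simp
    | add m m' hm hm' => simp only [add_mul, mul_add, map_add, hm, hm']
    | homogeneous m =>
      rename_i j
      obtain ⟨g, hg⟩ := m
      exact core i j f hf g hg

end transfer
end Aux


/-- The space of traces on an algebra `A`: linear functionals `T` with
`T(ab) = T(ba)`. -/
noncomputable def traceSpace (A : Type*) [Ring A] [Algebra ℂ A] :
    Submodule ℂ (A →ₗ[ℂ] ℂ) where
  carrier := {T | ∀ a b : A, T (a * b) = T (b * a)}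
  add_mem' := by intro x y hx hy a b; simp [hx a b, hy a b]
  zero_mem' := by intro a b; simp
  smul_mem' := by intro c x hx a b; simp [hx a b]

/-- The space of supertraces on a `ℤ/2`-graded algebra `A`: linear functionals
`T` with `T(fg) = (−1)^{π(f)π(g)} T(gf)` for homogeneous `f, g`. -/
noncomputable def supertraceSpace (A : Type*) [Ring A] [Algebra ℂ A]
    (𝒜 : ZMod 2 → Submodule ℂ A) : Submodule ℂ (A →ₗ[ℂ] ℂ) where
  carrier := {T | ∀ (i j : ZMod 2), ∀ f ∈ 𝒜 i, ∀ g ∈ 𝒜 j,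
    T (f * g) = (-1 : ℂ) ^ (i.val * j.val) * T (g * f)}
  add_mem' := by
    intro x y hx hy i j f hf g hg
    simp only [LinearMap.add_apply, hx i j f hf g hg, hy i j f hf g hg]; ring
  zero_mem' := by intro i j f hf g hg; simp
  smul_mem' := by
    intro c x hx i j f hf g hg
    simp only [LinearMap.smul_apply, hx i j f hf g hg, smul_eq_mul]; ring

/-- if a superalgebra `A` contains a Klein operator `K`, then
`tr ↦ (f ↦ tr(f·K^{1+π(f)}))` is a linear isomorphism from the space of traces
on `A` onto the space of supertraces on `A`. -/
theorem stmt14 (A : Type*) [Ring A] [Algebra ℂ A]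
    (𝒜 : ZMod 2 → Submodule ℂ A) [GradedAlgebra 𝒜]
    (K : A) (hK0 : K ∈ 𝒜 0) (hK2 : K ^ 2 = 1)
    (hK : ∀ (i : ZMod 2), ∀ f ∈ 𝒜 i, K * f = (-1 : A) ^ i.val * (f * K)) :
    ∃ e : traceSpace A ≃ₗ[ℂ] supertraceSpace A 𝒜,
      ∀ (T : traceSpace A) (i : ZMod 2), ∀ f ∈ 𝒜 i,
        (e T : A →ₗ[ℂ] ℂ) f = (T : A →ₗ[ℂ] ℂ) (f * K ^ (1 + i.val)) := by
  refine ⟨{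
    toFun := fun T => ⟨(T : A →ₗ[ℂ] ℂ) ∘ₗ phiMap 𝒜 K, trace_to_super hK2 hK T.2⟩
    map_add' := by intro x y; apply Subtype.ext; simp [LinearMap.add_comp]
    map_smul' := by intro c x; apply Subtype.ext; simp [LinearMap.smul_comp]
    invFun := fun S => ⟨(S : A →ₗ[ℂ] ℂ) ∘ₗ phiMap 𝒜 K, super_to_trace hK0 hK2 hK S.2⟩
    left_inv := by
      intro T; apply Subtype.ext; apply LinearMap.ext; intro a
      simp [phiMap_invol hK0 hK2]
    right_inv := by
      intro S; apply Subtype.ext; apply LinearMap.ext; intro a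
      simp [phiMap_invol hK0 hK2] }, ?_⟩
  intro T i f hf
  show ((T : A →ₗ[ℂ] ℂ) ∘ₗ phiMap 𝒜 K) f = (T : A →ₗ[ℂ] ℂ) (f * K ^ (1 + i.val))
  rw [LinearMap.comp_apply, phiMap_homog 𝒜 K hK2 i f hf]
end
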